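/- Let (Θ, 𝒜) be a measurable space, π a probability measure on Θ, n ≥ 1 a natural number, and ℓ : Fin n → Θ → ℝ a family of measurable functions with ℓ k θ > 0 for all k and θ, such that for every k ≤ n the partial product θ ↦ ∏_{j<k} ℓ j θ is integrable with respect to π and Z_k := ∫_Θ ∏_{j<k} ℓ j θ dπ(θ) > 0 and θ ↦ Real.log (ℓ k θ) is integrable with respect to the posterior μ_k := π.withDensity (θ ↦ (∏_{j<k} ℓ j θ) / Z_k) for every k < n. Let S := ∑_{k=0}^{n-1} ∫_Θ (− Real.log (ℓ k θ)) dμ_k(θ). Then for any real a, any c ≥ 0 and any δ > 0, a + c · (1 − Real.exp a · (Z_n · δ) ^ (1 / (n : ℝ))) ≤ a + c · (1 − Real.exp a · (Real.exp (−S) · δ) ^ (1 / (n : ℝ))). -/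

import Mathlib

open MeasureTheory
open scoped NNReal ENNReal

/-- Combining Theorem 3.3 with the antitonicity of the PAC-Bayes bound: the PAC-Bayes
bound evaluated at the true marginal likelihood `Z n` is upper-bounded by the estimator
based on the training-speed sum `S`. -/
theorem pac_bayes_bound_via_training_speed
    {Θ : Type*} [MeasurableSpace Θ] (π : Measure Θ) [IsProbabilityMeasure π]
    (n : ℕ) (hn : 1 ≤ n) (ℓ : Fin n → Θ → ℝ)
    (hmeas : ∀ k, Measurable (ℓ k))
    (hpos : ∀ k θ, 0 < ℓ k θ)
    (Z : ℕ → ℝ)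
    (hZ : ∀ k ≤ n, Z k =
      ∫ θ, (∏ j ∈ Finset.univ.filter (fun j : Fin n => (j : ℕ) < k), ℓ j θ) ∂π)
    (hint : ∀ k ≤ n, Integrable
      (fun θ => ∏ j ∈ Finset.univ.filter (fun j : Fin n => (j : ℕ) < k), ℓ j θ) π)
    (hZpos : ∀ k ≤ n, 0 < Z k)
    (μ : ℕ → Measure Θ)
    (hμ : ∀ k ≤ n, μ k = π.withDensity (fun θ =>
      ENNReal.ofReal ((∏ j ∈ Finset.univ.filter (fun j : Fin n => (j : ℕ) < k), ℓ j θ) / Z k)))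
    (hlogint : ∀ k : Fin n, Integrable (fun θ => Real.log (ℓ k θ)) (μ k))
    (S : ℝ) (hS : S = ∑ k : Fin n, ∫ θ, -Real.log (ℓ k θ) ∂(μ k))
    (a c δ : ℝ) (hc : 0 ≤ c) (hδ : 0 < δ) :
    a + c * (1 - Real.exp a * (Z n * δ) ^ (1 / (n : ℝ))) ≤
      a + c * (1 - Real.exp a * (Real.exp (-S) * δ) ^ (1 / (n : ℝ))) := by
  classical
  set P : ℕ → Θ → ℝ :=
    fun k θ => ∏ j ∈ Finset.univ.filter (fun j : Fin n => (j : ℕ) < k), ℓ j θ with hP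
  have hPmeas : ∀ k, Measurable (P k) := fun k =>
    Finset.measurable_prod _ fun j _ => hmeas j
  have hPpos : ∀ k θ, 0 < P k θ := fun k θ =>
    Finset.prod_pos fun j _ => hpos j θ
  -- step product identity
  have hstep : ∀ (k : Fin n) θ, P ((k : ℕ) + 1) θ = ℓ k θ * P k θ := by
    intro k θ
    have hins : Finset.univ.filter (fun j : Fin n => (j : ℕ) < (k : ℕ) + 1)
        = insert k (Finset.univ.filter (fun j : Fin n => (j : ℕ) < (k : ℕ))) := by
      ext j
      simp only [Finset.mem_filter, Finset.mem_univ, true_and, Finset.mem_insert, Fin.ext_iff]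
      omega
    simp only [hP, hins]
    rw [Finset.prod_insert (by simp)]
  -- density as an NNReal function
  have hdcoe : ∀ k ≤ n, ∀ θ : Θ, ((Real.toNNReal (P k θ / Z k) : ℝ≥0) : ℝ) = P k θ / Z k := by
    intro k hk θ
    exact Real.coe_toNNReal _ (le_of_lt (div_pos (hPpos k θ) (hZpos k hk)))
  have hdmeas : ∀ k, Measurable fun θ => Real.toNNReal (P k θ / Z k) := fun k =>
    ((hPmeas k).div_const _).real_toNNReal
  have hμ' : ∀ k ≤ n, μ k = π.withDensity (fun θ =>
      ((Real.toNNReal (P k θ / Z k) : ℝ≥0) : ℝ≥0∞)) := by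
    intro k hk
    rw [hμ k hk]
    rfl
  -- integrals over μ k
  have hμint : ∀ k ≤ n, ∀ g : Θ → ℝ,
      ∫ θ, g θ ∂(μ k) = ∫ θ, (P k θ / Z k) * g θ ∂π := by
    intro k hk g
    rw [hμ' k hk, integral_withDensity_eq_integral_smul (hdmeas k)]
    refine integral_congr_ae (Filter.Eventually.of_forall fun θ => ?_)
    simp only [NNReal.smul_def, smul_eq_mul, hdcoe k hk θ]
  -- μ k is a probability measure
  have hprob : ∀ k ≤ n, IsProbabilityMeasure (μ k) := by
    intro k hk
    constructor
    rw [hμ' k hk, withDensity_apply _ MeasurableSet.univ, Measure.restrict_univ]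
    have h1 : ∀ θ : Θ, ((Real.toNNReal (P k θ / Z k) : ℝ≥0) : ℝ≥0∞)
        = ENNReal.ofReal (P k θ / Z k) := fun θ => rfl
    simp only [h1]
    rw [← ofReal_integral_eq_lintegral_ofReal ((hint k hk).div_const _)
      (Filter.Eventually.of_forall fun θ => le_of_lt (div_pos (hPpos k θ) (hZpos k hk)))]
    rw [integral_div, ← hZ k hk, div_self (ne_of_gt (hZpos k hk)), ENNReal.ofReal_one]
  -- integral of ℓ k under μ k
  have hk1 : ∀ k : Fin n, (k : ℕ) + 1 ≤ n := fun k => k.isLt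
  have hkn : ∀ k : Fin n, (k : ℕ) ≤ n := fun k => le_of_lt k.isLt
  have hI : ∀ k : Fin n, ∫ θ, ℓ k θ ∂(μ k) = Z ((k : ℕ) + 1) / Z k := by
    intro k
    rw [hμint k (hkn k) (ℓ k)]
    have : ∀ θ, (P k θ / Z k) * ℓ k θ = P ((k : ℕ) + 1) θ / Z k := by
      intro θ; rw [hstep k θ]; ring
    simp only [this]
    rw [integral_div, ← hZ _ (hk1 k)]
  have hℓint : ∀ k : Fin n, Integrable (ℓ k) (μ k) := by
    intro k
    rw [hμ' k (hkn k), integrable_withDensity_iff_integrable_smul (hdmeas k)]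
    have : ∀ θ : Θ, (Real.toNNReal (P (k : ℕ) θ / Z k) : ℝ≥0) • ℓ k θ
        = P ((k : ℕ) + 1) θ / Z k := by
      intro θ
      rw [NNReal.smul_def, smul_eq_mul, hdcoe k (hkn k) θ, hstep k θ]; ring
    exact (Integrable.congr ((hint _ (hk1 k)).div_const (Z k))
      (Filter.Eventually.of_forall fun θ => (this θ).symm))
  -- Jensen-type bound for each term
  have hjensen : ∀ k : Fin n,
      ∫ θ, Real.log (ℓ k θ) ∂(μ k) ≤ Real.log (Z ((k : ℕ) + 1)) - Real.log (Z (k : ℕ)) := by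
    intro k
    haveI := hprob k (hkn k)
    set I := Z ((k : ℕ) + 1) / Z k with hIdef
    have hIpos : 0 < I := div_pos (hZpos _ (hk1 k)) (hZpos _ (hkn k))
    have hptwise : ∀ θ, Real.log (ℓ k θ) ≤ ℓ k θ / I + (Real.log I - 1) := by
      intro θ
      have h := Real.log_le_sub_one_of_pos (div_pos (hpos k θ) hIpos)
      rw [Real.log_div (ne_of_gt (hpos k θ)) (ne_of_gt hIpos)] at h
      linarith
    have hRHSint : Integrable (fun θ => ℓ k θ / I + (Real.log I - 1)) (μ k) :=
      ((hℓint k).div_const I).add (integrable_const _)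
    have hle : ∫ θ, Real.log (ℓ k θ) ∂(μ k)
        ≤ ∫ θ, (ℓ k θ / I + (Real.log I - 1)) ∂(μ k) :=
      integral_mono (hlogint k) hRHSint hptwise
    rw [integral_add ((hℓint k).div_const I) (integrable_const _), integral_div,
      integral_const, probReal_univ, one_smul, hI k] at hle
    rw [← hIdef, div_self (ne_of_gt hIpos)] at hle
    have : Real.log I = Real.log (Z ((k : ℕ) + 1)) - Real.log (Z (k : ℕ)) :=
      Real.log_div (ne_of_gt (hZpos _ (hk1 k))) (ne_of_gt (hZpos _ (hkn k)))
    linarith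
  -- sum up: exp (-S) ≤ Z n
  have hZ0 : Z 0 = 1 := by
    rw [hZ 0 (Nat.zero_le n)]
    have : (Finset.univ.filter (fun j : Fin n => (j : ℕ) < 0)) = (∅ : Finset (Fin n)) := by
      ext j; simp
    simp [this]
  have hsum : -S ≤ Real.log (Z n) := by
    have h1 : -S = ∑ k : Fin n, ∫ θ, Real.log (ℓ k θ) ∂(μ k) := by
      rw [hS, ← Finset.sum_neg_distrib]
      refine Finset.sum_congr rfl fun k _ => ?_
      rw [← integral_neg]; simp
    have h2 : ∑ k : Fin n, ∫ θ, Real.log (ℓ k θ) ∂(μ k)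
        ≤ ∑ k : Fin n, (Real.log (Z ((k : ℕ) + 1)) - Real.log (Z (k : ℕ))) :=
      Finset.sum_le_sum fun k _ => hjensen k
    have h3 : ∑ k : Fin n, (Real.log (Z ((k : ℕ) + 1)) - Real.log (Z (k : ℕ)))
        = Real.log (Z n) - Real.log (Z 0) := by
      rw [Fin.sum_univ_eq_sum_range (fun i => Real.log (Z (i + 1)) - Real.log (Z i))]
      exact Finset.sum_range_sub (fun i => Real.log (Z i)) n
    rw [hZ0, Real.log_one, sub_zero] at h3
    linarith
  have hkey : Real.exp (-S) ≤ Z n := by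
    calc Real.exp (-S) ≤ Real.exp (Real.log (Z n)) := Real.exp_le_exp.2 hsum
      _ = Z n := Real.exp_log (hZpos n le_rfl)
  -- conclude by antitonicity
  have h1 : Real.exp (-S) * δ ≤ Z n * δ := mul_le_mul_of_nonneg_right hkey hδ.le
  have h2 : (Real.exp (-S) * δ) ^ (1 / (n : ℝ)) ≤ (Z n * δ) ^ (1 / (n : ℝ)) :=
    Real.rpow_le_rpow (by positivity) h1 (by positivity)
  have hea : 0 < Real.exp a := Real.exp_pos a
  nlinarith [mul_le_mul_of_nonneg_left h2 hea.le]
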